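/- Let D be a totally unimodular real m×n matrix such that no index i is a loop (De_i ≠ 0 for every i) and no index i is a coloop (e_i ∉ B for every i), and suppose that 2x ∈ B_I for every x ∈ B_I^#. Then the columns of D pair up, equal up to sign: for every index i there exists a unique index j ≠ i such that De_i = De_j or De_i = −De_j. -/

import Mathlib

open Matrix

variable {m n : ℕ}

/-- The cycle space `Z = ker D`. -/
def cycleSpace (D : Matrix (Fin m) (Fin n) ℝ) : Submodule ℝ (Fin n → ℝ) :=
  LinearMap.ker D.mulVecLin

/-- The cut space `B = Z^⊥`, the orthogonal complement of the cycle space with respect to the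
standard inner product on `ℝⁿ`. -/
def cutSpace (D : Matrix (Fin m) (Fin n) ℝ) : Submodule ℝ (Fin n → ℝ) where
  carrier := {x | ∀ z ∈ cycleSpace D, x ⬝ᵥ z = 0}
  add_mem' := by
    intro a b ha hb z hz
    simp [add_dotProduct, ha z hz, hb z hz]
  zero_mem' := by
    intro z hz
    simp
  smul_mem' := by
    intro c a ha z hz
    simp [smul_dotProduct, ha z hz]

/-- The cycle lattice `Z_I = Z ∩ ℤⁿ`. -/
def cycleLattice (D : Matrix (Fin m) (Fin n) ℝ) : Set (Fin n → ℝ) :=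
  {x | x ∈ cycleSpace D ∧ ∀ i, ∃ k : ℤ, x i = (k : ℝ)}

/-- The cut lattice `B_I = B ∩ ℤⁿ`. -/
def cutLattice (D : Matrix (Fin m) (Fin n) ℝ) : Set (Fin n → ℝ) :=
  {x | x ∈ cutSpace D ∧ ∀ i, ∃ k : ℤ, x i = (k : ℝ)}

/-- The dual lattice `B_I^# = {x ∈ B : ⟨x,b⟩ ∈ ℤ for all b ∈ B_I}`. -/
def dualLattice (D : Matrix (Fin m) (Fin n) ℝ) : Set (Fin n → ℝ) :=
  {x | x ∈ cutSpace D ∧ ∀ b ∈ cutLattice D, ∃ k : ℤ, x ⬝ᵥ b = (k : ℝ)}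

/-- `P` is the orthogonal projection matrix onto the cut space `B`: `Px ∈ B` and
`x - Px ∈ B^⊥ = Z` for every `x`. -/
def IsCutProjection (D : Matrix (Fin m) (Fin n) ℝ) (P : Matrix (Fin n) (Fin n) ℝ) : Prop :=
  ∀ x : Fin n → ℝ, P.mulVec x ∈ cutSpace D ∧ x - P.mulVec x ∈ cycleSpace D

/-- Existence of the orthogonal projection onto the cut space. -/
theorem exists_cut_proj (D : Matrix (Fin m) (Fin n) ℝ) (v : Fin n → ℝ) :
    ∃ p : Fin n → ℝ, p ∈ cutSpace D ∧ v - p ∈ cycleSpace D := by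
  let Z : Submodule ℝ (EuclideanSpace ℝ (Fin n)) :=
    (cycleSpace D).comap (WithLp.linearEquiv 2 ℝ (Fin n → ℝ)).toLinearMap
  let v' : EuclideanSpace ℝ (Fin n) := (WithLp.equiv 2 (Fin n → ℝ)).symm v
  obtain ⟨p, hp, hvp⟩ : ∃ p : EuclideanSpace ℝ (Fin n), p ∈ Zᗮ ∧ v' - p ∈ Z := by
    refine ⟨Zᗮ.starProjection v', Zᗮ.starProjection_apply_mem _, ?_⟩
    have := Submodule.sub_starProjection_mem_orthogonal (K := Zᗮ) v'
    rwa [Submodule.orthogonal_orthogonal] at this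
  refine ⟨WithLp.equiv 2 (Fin n → ℝ) p, ?_, ?_⟩
  · intro z hz
    have hz' : ((WithLp.equiv 2 (Fin n → ℝ)).symm z) ∈ Z := hz
    have := hp _ hz'
    rw [real_inner_comm] at this
    simpa [PiLp.inner_apply, RCLike.inner_apply, dotProduct, mul_comm] using this
  · exact hvp

theorem dotProduct_self_pos' {v : Fin n → ℝ} (h : v ≠ 0) : 0 < v ⬝ᵥ v := by
  have h1 : v ⬝ᵥ v ≠ 0 := fun h0 => h ((dotProduct_self_eq_zero).mp h0)
  have h2 : 0 ≤ v ⬝ᵥ v := Finset.sum_nonneg fun j _ => mul_self_nonneg _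
  exact lt_of_le_of_ne h2 (Ne.symm h1)


/-- under the hypotheses of Statement 7, the columns of `D` pair up, equal up to
sign: for every `i` there is a unique `j ≠ i` with `De_i = De_j` or `De_i = -De_j`. -/
theorem stmt9 (m n : ℕ) (D : Matrix (Fin m) (Fin n) ℝ)
    (hTU : D.IsTotallyUnimodular)
    (hloop : ∀ i : Fin n, D.mulVec (Pi.single i (1 : ℝ)) ≠ 0)
    (hcoloop : ∀ i : Fin n, Pi.single i (1 : ℝ) ∉ cutSpace D)
    (hexp : ∀ x ∈ dualLattice D, (2 : ℝ) • x ∈ cutLattice D) :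
    ∀ i : Fin n, ∃! j : Fin n, j ≠ i ∧
      (D.mulVec (Pi.single i (1 : ℝ)) = D.mulVec (Pi.single j (1 : ℝ)) ∨
       D.mulVec (Pi.single i (1 : ℝ)) = -D.mulVec (Pi.single j (1 : ℝ))) := by
  clear hTU
  intro i
  classical
  obtain ⟨p, hpB, hpZ⟩ := exists_cut_proj D (Pi.single i (1 : ℝ))
  have hmem_cycle : ∀ x : Fin n → ℝ, x ∈ cycleSpace D ↔ D.mulVec x = 0 := by
    intro x; rw [cycleSpace, LinearMap.mem_ker, mulVecLin_apply]
  -- p pairs integrally with every element of the cut lattice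
  have hA : ∀ b ∈ cutSpace D, p ⬝ᵥ b = b i := by
    intro b hb
    have h0 : b ⬝ᵥ (Pi.single i (1 : ℝ) - p) = 0 := hb _ hpZ
    rw [dotProduct_sub, sub_eq_zero] at h0
    rw [dotProduct_comm, ← h0, dotProduct_single, mul_one]
  have hdual : p ∈ dualLattice D := by
    refine ⟨hpB, fun b hb => ?_⟩
    obtain ⟨k, hk⟩ := hb.2 i
    exact ⟨k, by rw [hA b hb.1, hk]⟩
  obtain ⟨-, hint⟩ := hexp p hdual
  choose c hc using hint
  have hc' : ∀ k, 2 * p k = (c k : ℝ) := by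
    intro k; have := hc k; simpa using this
  -- the squared norm of p equals p i
  have hB : p ⬝ᵥ p = p i := by
    have h0 : p ⬝ᵥ (Pi.single i (1 : ℝ) - p) = 0 := hpB _ hpZ
    rw [dotProduct_sub, sub_eq_zero] at h0
    rw [← h0, dotProduct_single, mul_one]
  -- p ≠ 0
  have hp0 : p ≠ 0 := by
    intro h0
    apply hloop i
    have : Pi.single i (1 : ℝ) - p ∈ cycleSpace D := hpZ
    rw [h0, sub_zero, hmem_cycle] at this
    exact this
  -- Pi.single i 1 - p ≠ 0
  have hq0 : Pi.single i (1 : ℝ) - p ≠ 0 := by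
    intro h0
    apply hcoloop i
    have hpe : p = Pi.single i (1 : ℝ) := (sub_eq_zero.mp h0).symm
    rwa [hpe] at hpB
  have hpi_pos : 0 < p i := hB ▸ dotProduct_self_pos' hp0
  have hpi_lt : p i < 1 := by
    have hqq : (Pi.single i (1 : ℝ) - p) ⬝ᵥ (Pi.single i (1 : ℝ) - p) = 1 - p i := by
      rw [sub_dotProduct, dotProduct_sub, dotProduct_sub, dotProduct_single,
        dotProduct_single, single_dotProduct, Pi.single_eq_same, hB]
      ring
    have := dotProduct_self_pos' hq0
    rw [hqq] at this; linarith
  -- c i = 1 and p i = 1/2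
  have hci : c i = 1 := by
    have h1 : (0 : ℝ) < (c i : ℝ) := by rw [← hc' i]; linarith
    have h2 : ((c i : ℝ)) < 2 := by rw [← hc' i]; linarith
    have h1' : 0 < c i := by exact_mod_cast h1
    have h2' : c i < 2 := by exact_mod_cast h2
    omega
  have hpihalf : p i = 1 / 2 := by
    have := hc' i; rw [hci] at this; push_cast at this; linarith
  -- sum of squares of c equals 2
  have hpp : ∑ k, p k * p k = p i := hB
  have hsum : ∑ k, c k * c k = 2 := by
    have hr : ((∑ k, c k * c k : ℤ) : ℝ) = 2 := by
      push_cast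
      calc (∑ k, ((c k : ℝ) * (c k : ℝ)))
          = ∑ k, 4 * (p k * p k) :=
            Finset.sum_congr rfl fun k _ => by rw [← hc' k]; ring
        _ = 4 * ∑ k, p k * p k := by rw [Finset.mul_sum]
        _ = 2 := by rw [hpp, hpihalf]; norm_num
    exact_mod_cast hr
  have hsum' : ∑ k ∈ Finset.univ.erase i, c k * c k = 1 := by
    have h2 : (∑ k ∈ Finset.univ.erase i, c k * c k) + c i * c i = ∑ k, c k * c k :=
      Finset.sum_erase_add _ _ (Finset.mem_univ i)
    rw [hci, hsum] at h2
    omega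
  -- find j ≠ i with c j ≠ 0
  obtain ⟨j, hjmem, hcj⟩ : ∃ j ∈ Finset.univ.erase i, c j ≠ 0 := by
    by_contra hcon
    push_neg at hcon
    have : ∑ k ∈ Finset.univ.erase i, c k * c k = 0 :=
      Finset.sum_eq_zero fun k hk => by rw [hcon k hk]; ring
    omega
  have hji : j ≠ i := (Finset.mem_erase.mp hjmem).1
  have hcj1 : c j * c j = 1 := by
    have hle : c j * c j ≤ 1 := by
      calc c j * c j ≤ ∑ k ∈ Finset.univ.erase i, c k * c k :=
            Finset.single_le_sum (fun k _ => mul_self_nonneg (c k)) hjmem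
        _ = 1 := hsum'
    have hge : 1 ≤ c j * c j := by
      rcases lt_or_gt_of_ne hcj with h | h <;> nlinarith
    omega
  -- all other entries of c vanish
  have hzero : ∀ k, k ≠ i → k ≠ j → c k = 0 := by
    intro k hki hkj
    have h3 : (∑ l ∈ (Finset.univ.erase i).erase j, c l * c l) + c j * c j
        = ∑ l ∈ Finset.univ.erase i, c l * c l :=
      Finset.sum_erase_add _ _ hjmem
    rw [hcj1, hsum'] at h3
    have hrest : ∑ l ∈ (Finset.univ.erase i).erase j, c l * c l = 0 := by omega
    have hk : k ∈ (Finset.univ.erase i).erase j :=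
      Finset.mem_erase.mpr ⟨hkj, Finset.mem_erase.mpr ⟨hki, Finset.mem_univ k⟩⟩
    have hle : c k * c k ≤ 0 := hrest ▸
      Finset.single_le_sum (fun l _ => mul_self_nonneg (c l)) hk
    nlinarith [mul_self_nonneg (c k)]
  have hpk : ∀ k, p k = (c k : ℝ) / 2 := fun k => by have := hc' k; linarith
  -- the column relation D e_i = c j • D e_j
  have hrel : D.mulVec (Pi.single i (1 : ℝ)) = (c j : ℝ) • D.mulVec (Pi.single j (1 : ℝ)) := by
    have hdecomp : Pi.single i (1 : ℝ) - p
        = (1 / 2 : ℝ) • (Pi.single i (1 : ℝ) : Fin n → ℝ)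
          - ((c j : ℝ) / 2) • (Pi.single j (1 : ℝ) : Fin n → ℝ) := by
      funext k
      simp only [Pi.sub_apply, Pi.smul_apply, smul_eq_mul, Pi.single_apply]
      rw [hpk k]
      by_cases hk1 : k = i
      · subst hk1
        rw [if_pos rfl, if_neg (fun h => hji h.symm), hci]
        push_cast; ring
      · rw [if_neg hk1]
        by_cases hk2 : k = j
        · subst hk2
          rw [if_pos rfl]
          ring
        · rw [if_neg hk2, hzero k hk1 hk2]
          push_cast; ring
    have h0 : D.mulVec (Pi.single i (1 : ℝ) - p) = 0 := (hmem_cycle _).mp hpZ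
    rw [hdecomp, mulVec_sub, mulVec_smul, mulVec_smul, sub_eq_zero] at h0
    funext r
    have hr := congrFun h0 r
    simp only [Pi.smul_apply, smul_eq_mul] at hr ⊢
    linarith
  have hpm : c j = 1 ∨ c j = -1 := Int.isUnit_iff.mp (IsUnit.of_mul_eq_one _ hcj1)
  refine ⟨j, ⟨hji, ?_⟩, ?_⟩
  · rcases hpm with h | h
    · left; rw [hrel, h]; push_cast; rw [one_smul]
    · right; rw [hrel, h]; push_cast; rw [neg_smul, one_smul]
  · -- uniqueness
    rintro j' ⟨hj'i, hor⟩
    by_contra hjj'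
    have hpj' : p j' = 0 := by
      rw [hpk j', hzero j' hj'i hjj']
      norm_num
    rcases hor with h | h
    · have hx : Pi.single i (1 : ℝ) - Pi.single j' (1 : ℝ) ∈ cycleSpace D := by
        rw [hmem_cycle, mulVec_sub, h, sub_self]
      have h0 := hpB _ hx
      rw [dotProduct_sub, dotProduct_single, dotProduct_single, mul_one, mul_one,
        hpihalf, hpj'] at h0
      norm_num at h0
    · have hx : Pi.single i (1 : ℝ) + Pi.single j' (1 : ℝ) ∈ cycleSpace D := by
        rw [hmem_cycle, mulVec_add, h, neg_add_cancel]
      have h0 := hpB _ hx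
      rw [dotProduct_add, dotProduct_single, dotProduct_single, mul_one, mul_one,
        hpihalf, hpj'] at h0
      norm_num at h0
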